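/- Let V₁, V₂ be real-analytic near 0 with V₁(0) = V₂(0) = 0, V₁'(0) > 0, V₂'(0) > 0, and suppose V₁^{(k)}(0) = V₂^{(k)}(0) for 0 ≤ k ≤ n-1 while V₁^{(n)}(0) ≠ V₂^{(n)}(0) for some n ≥ 2. Let a_j(E) be the unique root of V_j = E near 0. Then as E → 0, a₂(E) - a₁(E) = (q_n/√v₀)·(E/v₀)ⁿ + O(E^{n+1}), where v₀ = √(V₁'(0)V₂'(0)) and q_n = (V₁^{(n)}(0) - V₂^{(n)}(0)) / (n!·(V₁'(0)V₂'(0))^{1/4}). -/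

import Mathlib

open Filter Asymptotics
open scoped ContDiff Topology

private lemma pow_isBigO_pow' {k m : ℕ} (h : k ≤ m) :
    (fun x : ℝ => x ^ m) =O[nhds (0:ℝ)] fun x => x ^ k := by
  refine IsBigO.of_bound 1 ?_
  have h1 : ∀ᶠ x : ℝ in nhds 0, |x| ≤ 1 := by
    have := Metric.closedBall_mem_nhds (0:ℝ) one_pos
    filter_upwards [this] with x hx
    simpa [Real.dist_eq] using hx
  filter_upwards [h1] with x hx
  simp only [norm_pow, Real.norm_eq_abs, one_mul]
  exact pow_le_pow_of_le_one (abs_nonneg x) hx h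

private lemma coeff_eq_iteratedDeriv' {f : ℝ → ℝ} {p : FormalMultilinearSeries ℝ ℝ ℝ}
    (hf : HasFPowerSeriesAt f p 0) (k : ℕ) :
    p.coeff k = iteratedDeriv k f 0 / k.factorial := by
  obtain ⟨r, h⟩ := hf
  have h1 := h.factorial_smul (1:ℝ) k
  rw [FormalMultilinearSeries.apply_eq_pow_smul_coeff, one_pow, one_smul] at h1
  rw [iteratedDeriv, ← h1]
  simp [nsmul_eq_mul, Nat.factorial_ne_zero]

private lemma local_inverse_exists' (V : ℝ → ℝ) (hV : AnalyticAt ℝ V 0) (hV0 : V 0 = 0)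
    (hv : deriv V 0 ≠ 0) (a : ℝ → ℝ) (ha0 : a 0 = 0) (hac : ContinuousAt a 0)
    (hroot : ∀ᶠ E in nhds (0:ℝ), V (a E) = E) :
    ∃ W : ℝ → ℝ, AnalyticAt ℝ W 0 ∧ W 0 = 0 ∧ deriv W 0 = (deriv V 0)⁻¹ ∧
      a =ᶠ[nhds (0:ℝ)] W ∧ (∀ᶠ x in nhds (0:ℝ), W (V x) = x) ∧
      (∀ᶠ y in nhds (0:ℝ), V (W y) = y) := by
  have hcd : ContDiffAt ℝ ω V 0 := hV.contDiffAt
  have hsd : HasStrictDerivAt V (deriv V 0) 0 := hcd.hasStrictDerivAt (by simp)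
  have hstrict := hsd.hasStrictFDerivAt_equiv hv
  have hfd := hV.differentiableAt.hasDerivAt.hasFDerivAt_equiv hv
  refine ⟨hstrict.localInverse V _ 0, ?_, ?_, ?_, ?_, ?_, ?_⟩
  · have h1 : ContDiffAt ℝ ω (hcd.localInverse hfd (by simp)) (V 0) :=
      hcd.to_localInverse hfd (by simp)
    rw [hV0] at h1
    exact h1.analyticAt
  · have := hstrict.localInverse_apply_image
    rwa [hV0] at this
  · have h1 := hstrict.to_localInverse.hasFDerivAt.hasDerivAt
    rw [hV0] at h1
    rw [h1.deriv]
    simp [ContinuousLinearEquiv.unitsEquivAut]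
  · -- a =ᶠ localInverse
    set φ := hstrict.toOpenPartialHomeomorph V with hφ
    have hsrc : φ.source ∈ nhds (0:ℝ) :=
      φ.open_source.mem_nhds hstrict.mem_toOpenPartialHomeomorph_source
    have hVt : Tendsto V (nhds 0) (nhds 0) := by
      simpa [hV0] using hV.continuousAt.tendsto
    have hat : Tendsto (fun x => a (V x)) (nhds (0:ℝ)) (nhds 0) := by
      have h2 : Tendsto a (nhds 0) (nhds 0) := by simpa [ha0] using hac.tendsto
      exact h2.comp hVt
    have hg : ∀ᶠ x in nhds (0:ℝ), a (V x) = x := by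
      have h1 : ∀ᶠ x in nhds (0:ℝ), V (a (V x)) = V x := hVt.eventually hroot
      have h2 : ∀ᶠ x in nhds (0:ℝ), a (V x) ∈ φ.source := hat.eventually hsrc
      have h3 : ∀ᶠ x in nhds (0:ℝ), x ∈ φ.source := by
        filter_upwards [hsrc] with x hx using hx
      filter_upwards [h1, h2, h3] with x hx1 hx2 hx3
      exact φ.injOn hx2 hx3 hx1
    have := hstrict.localInverse_unique hg
    rwa [hV0] at this
  · exact hstrict.eventually_left_inverse
  · have := hstrict.eventually_right_inverse
    rwa [hV0] at this


/-- With `V₁, V₂` real-analytic near `0`, `V_j(0)=0`, `V_j'(0)>0`,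
agreeing to order `n-1` at `0` but not at order `n` (`n ≥ 2`), and `a_j(E)` the
root of `V_j = E` near `0`, one has
`a₂(E) - a₁(E) = (q_n/√v₀)(E/v₀)ⁿ + O(E^{n+1})` as `E → 0`, where
`v₀ = √(V₁'(0)V₂'(0))` and `q_n = (V₁⁽ⁿ⁾(0)-V₂⁽ⁿ⁾(0))/(n!(V₁'(0)V₂'(0))^{1/4})`. -/
theorem turning_points_difference (V₁ V₂ : ℝ → ℝ) (n : ℕ) (hn : 2 ≤ n)
    (hV₁ : AnalyticAt ℝ V₁ 0) (hV₂ : AnalyticAt ℝ V₂ 0)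
    (hV₁0 : V₁ 0 = 0) (hV₂0 : V₂ 0 = 0)
    (hV₁' : 0 < deriv V₁ 0) (hV₂' : 0 < deriv V₂ 0)
    (hagree : ∀ k < n, iteratedDeriv k V₁ 0 = iteratedDeriv k V₂ 0)
    (hneq : iteratedDeriv n V₁ 0 ≠ iteratedDeriv n V₂ 0)
    (a₁ a₂ : ℝ → ℝ) (ha₁0 : a₁ 0 = 0) (ha₂0 : a₂ 0 = 0)
    (ha₁c : ContinuousAt a₁ 0) (ha₂c : ContinuousAt a₂ 0)
    (hroot₁ : ∀ᶠ E in nhds (0:ℝ), V₁ (a₁ E) = E)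
    (hroot₂ : ∀ᶠ E in nhds (0:ℝ), V₂ (a₂ E) = E) :
    (fun E : ℝ => a₂ E - a₁ E -
        (iteratedDeriv n V₁ 0 - iteratedDeriv n V₂ 0) /
          ((n.factorial : ℝ) * (deriv V₁ 0 * deriv V₂ 0) ^ ((1:ℝ)/4)) /
          Real.sqrt (Real.sqrt (deriv V₁ 0 * deriv V₂ 0)) *
        (E / Real.sqrt (deriv V₁ 0 * deriv V₂ 0)) ^ n)
      =O[nhds 0] (fun E : ℝ => E ^ (n + 1)) := by
  classical
  -- first derivatives agree
  have hv2 : deriv V₂ 0 = deriv V₁ 0 := by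
    have := hagree 1 (by omega)
    simp only [iteratedDeriv_one] at this
    exact this.symm
  set v : ℝ := deriv V₁ 0 with hvdef
  have hvpos : (0:ℝ) < v := hV₁'
  have hvne : v ≠ 0 := ne_of_gt hvpos
  rw [hv2]
  set D : ℝ := iteratedDeriv n V₁ 0 - iteratedDeriv n V₂ 0 with hDdef
  -- simplify the constants
  have hss : Real.sqrt (v * v) = v := Real.sqrt_mul_self hvpos.le
  have hq4 : (v * v) ^ ((1:ℝ)/4) = Real.sqrt v := by
    rw [Real.sqrt_eq_rpow,
      show v * v = v ^ (2:ℝ) by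
        rw [show (2:ℝ) = ((2:ℕ):ℝ) by norm_num, Real.rpow_natCast]; ring,
      ← Real.rpow_mul hvpos.le]
    norm_num
  have hK : D / ((n.factorial : ℝ) * (v * v) ^ ((1:ℝ)/4)) / Real.sqrt (Real.sqrt (v * v))
      = D / ((n.factorial : ℝ) * v) := by
    rw [hq4, hss, div_div, mul_assoc, Real.mul_self_sqrt hvpos.le]
  rw [hK, hss]
  -- local inverses
  obtain ⟨W₁, hW₁a, hW₁0, hW₁d, hae₁, hWl₁, hWr₁⟩ :=
    local_inverse_exists' V₁ hV₁ hV₁0 hvne a₁ ha₁0 ha₁c hroot₁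
  obtain ⟨W₂, hW₂a, hW₂0, hW₂d, hae₂, hWl₂, hWr₂⟩ :=
    local_inverse_exists' V₂ hV₂ hV₂0 (by rw [hv2]; exact hvne) a₂ ha₂0 ha₂c hroot₂
  have hW₁d' : deriv W₁ 0 = v⁻¹ := hW₁d
  have hW₂d' : deriv W₂ 0 = v⁻¹ := by rw [hW₂d, hv2]
  -- power series
  obtain ⟨p₁, hp₁⟩ := id hV₁
  obtain ⟨p₂, hp₂⟩ := id hV₂
  obtain ⟨pw₁, hpw₁⟩ := id hW₁a
  obtain ⟨pw₂, hpw₂⟩ := id hW₂a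
  have hq12 : HasFPowerSeriesAt (fun x => V₂ x - V₁ x) (p₂ - p₁) 0 := hp₂.sub hp₁
  have hδcoeff : ∀ k, (p₂ - p₁).coeff k
      = iteratedDeriv k V₂ 0 / k.factorial - iteratedDeriv k V₁ 0 / k.factorial := by
    intro k
    have h1 : (p₂ - p₁).coeff k = p₂.coeff k - p₁.coeff k := rfl
    rw [h1, coeff_eq_iteratedDeriv' hp₂, coeff_eq_iteratedDeriv' hp₁]
  have hsmall : ∀ k < n, (p₂ - p₁).coeff k = 0 := by
    intro k hk
    rw [hδcoeff k, hagree k hk]; ring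
  set d : ℝ := (p₂ - p₁).coeff n with hddef
  have hdcoeff : d = (iteratedDeriv n V₂ 0 - iteratedDeriv n V₁ 0) / n.factorial := by
    rw [hddef, hδcoeff]; ring
  have hcoeffw1 : pw₁.coeff 1 = v⁻¹ := by
    rw [coeff_eq_iteratedDeriv' hpw₁]
    simp [iteratedDeriv_one, hW₁d']
  have hcoeffw2 : pw₂.coeff 1 = v⁻¹ := by
    rw [coeff_eq_iteratedDeriv' hpw₂]
    simp [iteratedDeriv_one, hW₂d']
  have hcoeffw0 : pw₂.coeff 0 = 0 := by
    rw [coeff_eq_iteratedDeriv' hpw₂]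
    simp [iteratedDeriv_zero, hW₂0]
  -- partial sums in one dimension
  have hps : ∀ (p : FormalMultilinearSeries ℝ ℝ ℝ) (m : ℕ) (x : ℝ),
      p.partialSum m x = ∑ k ∈ Finset.range m, p.coeff k * x ^ k := by
    intro p m x
    unfold FormalMultilinearSeries.partialSum
    refine Finset.sum_congr rfl fun k _ => ?_
    rw [FormalMultilinearSeries.apply_eq_pow_smul_coeff, smul_eq_mul, mul_comm]
  -- Taylor remainder estimates
  have key : ∀ (f : ℝ → ℝ) (p : FormalMultilinearSeries ℝ ℝ ℝ), HasFPowerSeriesAt f p 0 →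
      ∀ m, (fun y => f y - p.partialSum m y) =O[nhds (0:ℝ)] fun y => y ^ m := by
    intro f p hf m
    have h1 := hf.isBigO_sub_partialSum_pow m
    simp only [zero_add] at h1
    have h2 : (fun y : ℝ => ‖y‖ ^ m) =O[nhds (0:ℝ)] fun y => y ^ m := by
      simp only [← norm_pow]
      exact isBigO_norm_left.mpr (isBigO_refl _ _)
    exact h1.trans h2
  -- continuity / tendsto facts
  have hW₂t : Filter.Tendsto W₂ (nhds 0) (nhds 0) := by
    simpa [hW₂0] using hW₂a.continuousAt.tendsto
  have hgt : Filter.Tendsto (fun E => V₁ (W₂ E)) (nhds (0:ℝ)) (nhds 0) := by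
    have hVt : Filter.Tendsto V₁ (nhds 0) (nhds 0) := by
      simpa [hV₁0] using hV₁.continuousAt.tendsto
    exact hVt.comp hW₂t
  -- basic bigO facts
  have hW₂O : (fun E => W₂ E) =O[nhds (0:ℝ)] fun E => E := by
    have h1 := hW₂a.differentiableAt.hasFDerivAt.isBigO_sub
    simpa [hW₂0] using h1
  have hga : AnalyticAt ℝ (fun E => V₁ (W₂ E)) 0 := by
    have h1 : AnalyticAt ℝ V₁ (W₂ 0) := by rw [hW₂0]; exact hV₁
    exact h1.comp hW₂a
  have hgO : (fun E => V₁ (W₂ E)) =O[nhds (0:ℝ)] fun E => E := by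
    have h1 := hga.differentiableAt.hasFDerivAt.isBigO_sub
    simpa [hW₂0, hV₁0] using h1
  -- the difference of potentials
  have hpsδn : ∀ x : ℝ, (p₂ - p₁).partialSum n x = 0 := by
    intro x; rw [hps]
    exact Finset.sum_eq_zero fun k hk => by
      rw [hsmall k (Finset.mem_range.mp hk)]; ring
  have hδO : (fun x => V₂ x - V₁ x) =O[nhds (0:ℝ)] fun x => x ^ n := by
    have := key _ _ hq12 n
    simpa [hpsδn] using this
  have hpsδn1 : ∀ x : ℝ, (p₂ - p₁).partialSum (n+1) x = d * x ^ n := by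
    intro x; rw [hps]
    rw [Finset.sum_eq_single n
      (fun k hk hkn => by
        rw [hsmall k (by have := Finset.mem_range.mp hk; omega)]; ring)
      (fun h => absurd (Finset.self_mem_range_succ n) h)]
  have hδd : (fun x => (V₂ x - V₁ x) - d * x ^ n) =O[nhds (0:ℝ)] fun x => x ^ (n+1) := by
    have := key _ _ hq12 (n+1)
    simpa [hpsδn1] using this
  have hpsW₂ : ∀ x : ℝ, pw₂.partialSum 2 x = x / v := by
    intro x; rw [hps]
    rw [Finset.sum_range_succ, Finset.sum_range_one, hcoeffw0, hcoeffw2]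
    field_simp
    ring
  have hW₂lin : (fun E => W₂ E - E / v) =O[nhds (0:ℝ)] fun E => E ^ 2 := by
    have := key _ _ hpw₂ 2
    simpa [hpsW₂] using this
  -- V₁ (W₂ E) - E = O(E^n)
  have hdiffg : (fun E => V₁ (W₂ E) - E) =O[nhds (0:ℝ)] fun E => E ^ n := by
    have hcomp : (fun E => V₂ (W₂ E) - V₁ (W₂ E)) =O[nhds (0:ℝ)] fun E => E ^ n :=
      (hδO.comp_tendsto hW₂t).trans (hW₂O.pow n)
    have hev : (fun E => V₁ (W₂ E) - E) =ᶠ[nhds (0:ℝ)]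
        fun E => -(V₂ (W₂ E) - V₁ (W₂ E)) := by
      filter_upwards [hWr₂] with E hE; linarith
    exact hev.trans_isBigO hcomp.neg_left
  -- the five pieces
  have hF₁ : (fun E => W₁ (V₁ (W₂ E)) - pw₁.partialSum (n+2) (V₁ (W₂ E)))
      =O[nhds (0:ℝ)] fun E => E ^ (n+1) :=
    (((key W₁ pw₁ hpw₁ (n+2)).comp_tendsto hgt).trans (hgO.pow (n+2))).trans
      (pow_isBigO_pow' (by omega))
  have hF₂ : (fun E => W₁ E - pw₁.partialSum (n+2) E) =O[nhds (0:ℝ)] fun E => E ^ (n+1) :=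
    (key W₁ pw₁ hpw₁ (n+2)).trans (pow_isBigO_pow' (by omega))
  have hF₃ : (fun E => ∑ k ∈ Finset.Ico 2 (n+2), pw₁.coeff k * ((V₁ (W₂ E)) ^ k - E ^ k))
      =O[nhds (0:ℝ)] fun E => E ^ (n+1) := by
    refine IsBigO.fun_sum fun k hk => ?_
    obtain ⟨hk2, hkn⟩ := Finset.mem_Ico.mp hk
    have hsum : (fun E => ∑ i ∈ Finset.range k, (V₁ (W₂ E)) ^ i * E ^ (k - 1 - i))
        =O[nhds (0:ℝ)] fun E => E ^ (k-1) := by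
      refine IsBigO.fun_sum fun i hi => ?_
      have hik : i ≤ k - 1 := by have := Finset.mem_range.mp hi; omega
      have h1 : (fun E => (V₁ (W₂ E)) ^ i * E ^ (k - 1 - i))
          =O[nhds (0:ℝ)] fun E => E ^ i * E ^ (k-1-i) :=
        (hgO.pow i).mul (isBigO_refl _ _)
      have h2 : (fun E : ℝ => E ^ i * E ^ (k-1-i)) = fun E => E ^ (k-1) :=
        funext fun E => by rw [← pow_add]; congr 1; omega
      rwa [h2] at h1
    have hside : (fun E : ℝ => E ^ (k-1) * E ^ n) =O[nhds (0:ℝ)] fun E => E ^ (n+1) := by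
      have h3 : (fun E : ℝ => E ^ (k-1) * E ^ n) = fun E => E ^ (k-1+n) :=
        funext fun E => (pow_add E _ n).symm
      rw [h3]; exact pow_isBigO_pow' (by omega)
    have hO := (hsum.mul hdiffg).trans hside
    have hO2 := hO.const_mul_left (pw₁.coeff k)
    refine hO2.congr_left fun E => ?_
    rw [geom_sum₂_mul]
  have hF₄ : (fun E => v⁻¹ * ((V₂ (W₂ E) - V₁ (W₂ E)) - d * (W₂ E) ^ n))
      =O[nhds (0:ℝ)] fun E => E ^ (n+1) :=
    ((hδd.comp_tendsto hW₂t).trans (hW₂O.pow (n+1))).const_mul_left _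
  have hF₅ : (fun E => v⁻¹ * d * ((W₂ E) ^ n - (E / v) ^ n))
      =O[nhds (0:ℝ)] fun E => E ^ (n+1) := by
    have hEv : (fun E : ℝ => E / v) =O[nhds (0:ℝ)] fun E => E := by
      refine IsBigO.of_bound |v⁻¹| ?_
      filter_upwards with E
      simp [div_eq_inv_mul, abs_mul, abs_inv]
    have hsum : (fun E => ∑ i ∈ Finset.range n, (W₂ E) ^ i * (E / v) ^ (n - 1 - i))
        =O[nhds (0:ℝ)] fun E => E ^ (n-1) := by
      refine IsBigO.fun_sum fun i hi => ?_
      have hik : i ≤ n - 1 := by have := Finset.mem_range.mp hi; omega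
      have h1 : (fun E => (W₂ E) ^ i * (E / v) ^ (n - 1 - i))
          =O[nhds (0:ℝ)] fun E => E ^ i * E ^ (n-1-i) :=
        (hW₂O.pow i).mul (hEv.pow _)
      have h2 : (fun E : ℝ => E ^ i * E ^ (n-1-i)) = fun E => E ^ (n-1) :=
        funext fun E => by rw [← pow_add]; congr 1; omega
      rwa [h2] at h1
    have hside : (fun E : ℝ => E ^ (n-1) * E ^ 2) =O[nhds (0:ℝ)] fun E => E ^ (n+1) := by
      have h3 : (fun E : ℝ => E ^ (n-1) * E ^ 2) = fun E => E ^ (n+1) :=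
        funext fun E => by rw [← pow_add]; congr 1; omega
      rw [h3]
    have hO := (hsum.mul hW₂lin).trans hside
    have hO2 := hO.const_mul_left (v⁻¹ * d)
    refine hO2.congr_left fun E => ?_
    rw [geom_sum₂_mul]
  have htotal := (((hF₁.sub hF₂).add hF₃).sub hF₄).sub hF₅
  -- algebraic splitting of the Taylor polynomial
  have hsplit : ∀ x y : ℝ, pw₁.partialSum (n+2) x - pw₁.partialSum (n+2) y
      = pw₁.coeff 1 * (x - y) + ∑ k ∈ Finset.Ico 2 (n+2), pw₁.coeff k * (x ^ k - y ^ k) := by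
    intro x y
    rw [hps, hps, ← Finset.sum_sub_distrib]
    rw [Finset.sum_congr rfl (fun k _ => by
      show pw₁.coeff k * x ^ k - pw₁.coeff k * y ^ k = pw₁.coeff k * (x ^ k - y ^ k)
      ring)]
    rw [Finset.range_eq_Ico,
      ← Finset.sum_Ico_consecutive _ (by omega : (0:ℕ) ≤ 2) (by omega : 2 ≤ n+2)]
    have h01 : ∑ k ∈ Finset.Ico 0 2, pw₁.coeff k * (x ^ k - y ^ k)
        = pw₁.coeff 1 * (x - y) := by
      rw [show Finset.Ico 0 2 = Finset.range 2 from (Finset.range_eq_Ico 2).symm,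
        Finset.sum_range_succ, Finset.sum_range_one]
      ring
    rw [h01]
  -- the constant identity
  have hcd : D / ((n.factorial : ℝ) * v) = -(v⁻¹ * d) := by
    have hfac : (n.factorial : ℝ) ≠ 0 := Nat.cast_ne_zero.mpr n.factorial_ne_zero
    rw [hdcoeff, hDdef]
    rw [div_eq_iff (by positivity : ((n.factorial:ℝ) * v) ≠ 0)]
    field_simp
    ring
  -- the eventual identity
  have hWlc : ∀ᶠ E in nhds (0:ℝ), W₁ (V₁ (W₂ E)) = W₂ E := hW₂t.eventually hWl₁
  have hmain : (fun E => a₂ E - a₁ E - D / ((n.factorial : ℝ) * v) * (E / v) ^ n)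
      =ᶠ[nhds (0:ℝ)]
      (fun E => (W₁ (V₁ (W₂ E)) - pw₁.partialSum (n+2) (V₁ (W₂ E)))
        - (W₁ E - pw₁.partialSum (n+2) E)
        + (∑ k ∈ Finset.Ico 2 (n+2), pw₁.coeff k * ((V₁ (W₂ E)) ^ k - E ^ k))
        - v⁻¹ * ((V₂ (W₂ E) - V₁ (W₂ E)) - d * (W₂ E) ^ n)
        - v⁻¹ * d * ((W₂ E) ^ n - (E / v) ^ n)) := by
    filter_upwards [hae₁, hae₂, hWlc, hWr₂] with E h1 h2 h3 h4
    have hTT := hsplit (V₁ (W₂ E)) E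
    rw [hcoeffw1] at hTT
    rw [h1, h2, h3]
    linear_combination hTT + v⁻¹ * h4 - (E / v) ^ n * hcd
  exact hmain.trans_isBigO htotal
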